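/- arXiv:2107.13340 — 3 statements merged into one kernel-verified Lean document; each statement's English description precedes it below -/
import Mathlib

section
/- Let θ > 0 and define F(u) := θ ∫₀^u e^{-t} ₁F₁(θ,1,t) dt, where ₁F₁(θ,1,t) = Σ_{n≥0} θ^{(n)} tⁿ/(n!)² is Kummer's confluent hypergeometric function. Then for every u ≥ 0, F(u) = θ e^{-u} Σ_{n=0}^{∞} (θ^{(n)}/n!) Σ_{k=n+1}^{∞} u^k/k!. -/
open MeasureTheory

/-- The rising factorial `θ^{(n)} = θ(θ+1)⋯(θ+n-1)`, with `θ^{(0)} = 1`. -/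
noncomputable def risingFactorial (θ : ℝ) (n : ℕ) : ℝ := ∏ i ∈ Finset.range n, (θ + (i : ℝ))

/-- Kummer's confluent hypergeometric function `₁F₁(θ, 1, t) = ∑_{n≥0} θ^{(n)} tⁿ/(n!)²`. -/
noncomputable def kummerM (θ t : ℝ) : ℝ :=
  ∑' n : ℕ, risingFactorial θ n * t ^ n / ((Nat.factorial n : ℝ)) ^ 2

/-- `F(u) = θ ∫₀^u e^{-t} ₁F₁(θ,1,t) dt`. -/
noncomputable def Fkum (θ u : ℝ) : ℝ := θ * ∫ t in (0:ℝ)..u, Real.exp (-t) * kummerM θ t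

open Finset

lemma Fkum_aux_rf_nonneg (θ : ℝ) (hθ : 0 < θ) (n : ℕ) : 0 ≤ risingFactorial θ n := by
  apply Finset.prod_nonneg; intro i _; positivity

lemma Fkum_aux_rf_le (θ : ℝ) (hθ : 0 < θ) (n : ℕ) :
    risingFactorial θ n ≤ (⌈θ⌉₊ : ℝ) ^ n * (Nat.factorial n : ℝ) := by
  induction n with
  | zero => simp [risingFactorial]
  | succ n ih =>
    have hM1 : (1:ℝ) ≤ (⌈θ⌉₊ : ℝ) := by exact_mod_cast Nat.one_le_ceil_iff.mpr hθ
    have hrfnn := Fkum_aux_rf_nonneg θ hθ n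
    have hstep : θ + n ≤ (⌈θ⌉₊ : ℝ) * (n + 1) := by
      have : θ ≤ (⌈θ⌉₊ : ℝ) := Nat.le_ceil θ
      nlinarith
    rw [risingFactorial, Finset.prod_range_succ, ← risingFactorial]
    calc risingFactorial θ n * (θ + n)
        ≤ ((⌈θ⌉₊ : ℝ) ^ n * (Nat.factorial n : ℝ)) * ((⌈θ⌉₊ : ℝ) * (n + 1)) := by
          apply mul_le_mul ih hstep (by positivity) (by positivity)
      _ = (⌈θ⌉₊ : ℝ) ^ (n+1) * (Nat.factorial (n+1) : ℝ) := by
          rw [pow_succ, Nat.factorial_succ]; push_cast; ring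

lemma Fkum_aux_tail (u : ℝ) (n : ℕ) :
    ∑' k : ℕ, u ^ (n + 1 + k) / (Nat.factorial (n + 1 + k) : ℝ)
      = Real.exp u - ∑ k ∈ range (n + 1), u ^ k / (Nat.factorial k : ℝ) := by
  have hs := Real.summable_pow_div_factorial u
  have h := Summable.sum_add_tsum_nat_add (n + 1) hs
  have hre : (fun k : ℕ => u ^ (k + (n+1)) / (Nat.factorial (k + (n+1)) : ℝ))
      = fun k : ℕ => u ^ (n + 1 + k) / (Nat.factorial (n + 1 + k) : ℝ) := by
    funext k; rw [add_comm k (n+1)]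
  rw [hre] at h
  rw [Real.exp_eq_exp_ℝ, NormedSpace.exp_eq_tsum_div]
  linarith

lemma Fkum_aux_expneg_hasDeriv (t : ℝ) :
    HasDerivAt (fun t : ℝ => -Real.exp (-t)) (Real.exp (-t)) t := by
  have h1 : HasDerivAt (fun t : ℝ => Real.exp (-t)) (Real.exp (-t) * (-1)) t :=
    (Real.hasDerivAt_exp (-t)).comp t ((hasDerivAt_id t).neg)
  have h2 : HasDerivAt (fun t : ℝ => -Real.exp (-t)) (-(Real.exp (-t) * (-1))) t := h1.neg
  simpa using h2

lemma Fkum_aux_integral (u : ℝ) (n : ℕ) :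
    ∫ t in (0:ℝ)..u, Real.exp (-t) * t ^ n
      = (Nat.factorial n : ℝ) *
        (Real.exp (-u) * (Real.exp u - ∑ k ∈ range (n+1), u ^ k / (Nat.factorial k : ℝ))) := by
  induction n with
  | zero =>
    have h := intervalIntegral.integral_eq_sub_of_hasDerivAt
      (f := fun t : ℝ => -Real.exp (-t)) (f' := fun t : ℝ => Real.exp (-t))
      (a := 0) (b := u) (fun t _ => Fkum_aux_expneg_hasDeriv t)
      ((Real.continuous_exp.comp continuous_neg).intervalIntegrable 0 u)
    simp only [pow_zero, mul_one, h]
    have : Real.exp (-u) * Real.exp u = 1 := by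
      rw [← Real.exp_add]; simp
    simp [Finset.sum_range_one]
    nlinarith [this]
  | succ n ih =>
    have hu' : ∀ x ∈ Set.uIcc (0:ℝ) u, HasDerivAt (fun t : ℝ => t ^ (n+1))
        (((n:ℝ)+1) * x ^ n) x := by
      intro x _
      have := hasDerivAt_pow (n+1) x
      simpa using this
    have hv' : ∀ x ∈ Set.uIcc (0:ℝ) u, HasDerivAt (fun t : ℝ => -Real.exp (-t))
        (Real.exp (-x)) x := fun x _ => Fkum_aux_expneg_hasDeriv x
    have key := intervalIntegral.integral_mul_deriv_eq_deriv_mul hu' hv'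
      ((continuous_const.mul (continuous_pow n)).intervalIntegrable 0 u)
      ((Real.continuous_exp.comp continuous_neg).intervalIntegrable 0 u)
    have hl : (∫ t in (0:ℝ)..u, Real.exp (-t) * t ^ (n+1))
        = ∫ t in (0:ℝ)..u, t ^ (n+1) * Real.exp (-t) := by
      congr 1; ext t; ring
    have hr : (∫ x in (0:ℝ)..u, ((n:ℝ)+1) * x ^ n * -Real.exp (-x))
        = (-((n:ℝ)+1)) * ∫ x in (0:ℝ)..u, Real.exp (-x) * x ^ n := by
      rw [← intervalIntegral.integral_const_mul]
      congr 1; ext x; ring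
    rw [hl, key, hr, ih]
    rw [Finset.sum_range_succ (f := fun k => u ^ k / (Nat.factorial k : ℝ)) (n+1)]
    have hfac : ((Nat.factorial (n+1) : ℝ)) ≠ 0 := by positivity
    set S := ∑ k ∈ range (n+1), u ^ k / (Nat.factorial k : ℝ) with hS
    rw [Nat.factorial_succ]
    push_cast
    field_simp
    ring

lemma Fkum_aux_swap (θ u : ℝ) (hθ : 0 < θ) (hu : 0 ≤ u) :
    ∫ t in (0:ℝ)..u, Real.exp (-t) * kummerM θ t
      = ∑' n : ℕ, risingFactorial θ n / ((Nat.factorial n : ℝ)) ^ 2 *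
          ∫ t in (0:ℝ)..u, Real.exp (-t) * t ^ n := by
  set μ := volume.restrict (Set.Ioc (0:ℝ) u) with hμ
  set F : ℕ → ℝ → ℝ := fun n t =>
    risingFactorial θ n / ((Nat.factorial n : ℝ)) ^ 2 * (Real.exp (-t) * t ^ n) with hF
  have hcont : ∀ n, Continuous (F n) := by
    intro n
    exact continuous_const.mul ((Real.continuous_exp.comp continuous_neg).mul (continuous_pow n))
  have hint : ∀ n, Integrable (F n) μ := fun n => (hcont n).integrableOn_Ioc
  have hbound : ∀ n, (∫ a, ‖F n a‖ ∂μ)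
      ≤ (risingFactorial θ n / ((Nat.factorial n : ℝ)) ^ 2 * u ^ n) * u := by
    intro n
    have hpt : ∀ a ∈ Set.Ioc (0:ℝ) u, ‖F n a‖
        ≤ risingFactorial θ n / ((Nat.factorial n : ℝ)) ^ 2 * u ^ n := by
      intro a ha
      have ha0 : 0 < a := ha.1
      have hau : a ≤ u := ha.2
      have hFnn : 0 ≤ F n a := by
        apply mul_nonneg (div_nonneg (Fkum_aux_rf_nonneg θ hθ n) (by positivity))
        positivity
      rw [Real.norm_eq_abs, abs_of_nonneg hFnn]
      have he : Real.exp (-a) ≤ 1 := Real.exp_le_one_iff.mpr (by linarith)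
      have hap : a ^ n ≤ u ^ n := pow_le_pow_left₀ ha0.le hau n
      have : Real.exp (-a) * a ^ n ≤ u ^ n := by
        calc Real.exp (-a) * a ^ n ≤ 1 * a ^ n := by
              apply mul_le_mul_of_nonneg_right he (by positivity)
          _ = a ^ n := one_mul _
          _ ≤ u ^ n := hap
      exact mul_le_mul_of_nonneg_left this
        (div_nonneg (Fkum_aux_rf_nonneg θ hθ n) (by positivity))
    calc (∫ a, ‖F n a‖ ∂μ)
        ≤ ∫ _ in Set.Ioc (0:ℝ) u,
            (risingFactorial θ n / ((Nat.factorial n : ℝ)) ^ 2 * u ^ n) ∂volume := by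
          apply setIntegral_mono_on (hint n).norm (integrable_const _) measurableSet_Ioc hpt
      _ = (risingFactorial θ n / ((Nat.factorial n : ℝ)) ^ 2 * u ^ n) * u := by
          rw [setIntegral_const, measureReal_def, Real.volume_Ioc, smul_eq_mul]
          rw [ENNReal.toReal_ofReal (by linarith)]
          ring
  have hsum : Summable fun n => ∫ a, ‖F n a‖ ∂μ := by
    apply Summable.of_nonneg_of_le
      (fun n => integral_nonneg (fun a => norm_nonneg _))
      (fun n => le_trans (hbound n) ?_)
      (((Real.summable_pow_div_factorial ((⌈θ⌉₊ : ℝ) * u)).mul_left u))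
    · calc (risingFactorial θ n / ((Nat.factorial n : ℝ)) ^ 2 * u ^ n) * u
          ≤ (((⌈θ⌉₊ : ℝ) ^ n * (Nat.factorial n : ℝ)) / ((Nat.factorial n : ℝ)) ^ 2 * u ^ n) * u := by
            have h := Fkum_aux_rf_le θ hθ n
            have h2 : risingFactorial θ n / ((Nat.factorial n : ℝ)) ^ 2
                ≤ ((⌈θ⌉₊ : ℝ) ^ n * (Nat.factorial n : ℝ)) / ((Nat.factorial n : ℝ)) ^ 2 :=
              div_le_div_of_nonneg_right h (by positivity) |>.trans_eq rfl
            apply mul_le_mul_of_nonneg_right _ hu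
            exact mul_le_mul_of_nonneg_right h2 (by positivity)
        _ = u * (((⌈θ⌉₊ : ℝ) * u) ^ n / (Nat.factorial n : ℝ)) := by
            have hfac : ((Nat.factorial n : ℝ)) ≠ 0 := by positivity
            rw [mul_pow]; field_simp
  have hswap := MeasureTheory.integral_tsum_of_summable_integral_norm hint hsum
  have hpt2 : ∀ t : ℝ, (∑' n, F n t) = Real.exp (-t) * kummerM θ t := by
    intro t
    rw [kummerM, ← tsum_mul_left]
    apply tsum_congr
    intro n
    rw [hF]
    ring
  have hleft : ∀ n, (∫ a, F n a ∂μ)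
      = risingFactorial θ n / ((Nat.factorial n : ℝ)) ^ 2 *
          ∫ t in (0:ℝ)..u, Real.exp (-t) * t ^ n := by
    intro n
    rw [intervalIntegral.integral_of_le hu, ← MeasureTheory.integral_const_mul]
  rw [intervalIntegral.integral_of_le hu, ← hμ]
  calc (∫ t, Real.exp (-t) * kummerM θ t ∂μ)
      = ∫ t, (∑' n, F n t) ∂μ := by
        apply integral_congr_ae
        filter_upwards with t
        exact (hpt2 t).symm
    _ = ∑' n, ∫ a, F n a ∂μ := hswap.symm
    _ = _ := by
        apply tsum_congr
        intro n
        rw [hleft n]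

/-- For `θ > 0` and every `u ≥ 0`,
`F(u) = θ e^{-u} ∑_{n=0}^∞ (θ^{(n)}/n!) ∑_{k=n+1}^∞ u^k/k!`. -/
theorem Fkum_series (θ : ℝ) (hθ : 0 < θ) (u : ℝ) (hu : 0 ≤ u) :
    Fkum θ u = θ * Real.exp (-u) *
      ∑' n : ℕ, (risingFactorial θ n / (Nat.factorial n : ℝ)) *
        ∑' k : ℕ, u ^ (n + 1 + k) / (Nat.factorial (n + 1 + k) : ℝ) := by
  have hterm : ∀ n : ℕ,
      risingFactorial θ n / ((Nat.factorial n : ℝ)) ^ 2 *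
        ∫ t in (0:ℝ)..u, Real.exp (-t) * t ^ n
      = Real.exp (-u) * ((risingFactorial θ n / (Nat.factorial n : ℝ)) *
          ∑' k : ℕ, u ^ (n + 1 + k) / (Nat.factorial (n + 1 + k) : ℝ)) := by
    intro n
    rw [Fkum_aux_integral, Fkum_aux_tail]
    have hfac : ((Nat.factorial n : ℝ)) ≠ 0 := by positivity
    field_simp
  rw [Fkum, Fkum_aux_swap θ u hθ hu, tsum_congr hterm, tsum_mul_left]
  ring
end

section
/- Let θ > 0 and F(u) := θ ∫₀^u e^{-t} ₁F₁(θ,1,t) dt. Then for all a > 0 and v ≥ 0, ∫₀¹ β⁻¹(1-β)^{θ-1} e^{avβ} F(avβ) dβ = e^{av} − 1. -/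
open MeasureTheory

lemma rf_succ (θ : ℝ) (n : ℕ) : risingFactorial θ (n+1) = risingFactorial θ n * (θ + n) :=
  Finset.prod_range_succ _ _

lemma rf_pos {θ : ℝ} (hθ : 0 < θ) (n : ℕ) : 0 < risingFactorial θ n :=
  Finset.prod_pos (fun i _ => by positivity)

lemma rf_le {θ : ℝ} (hθ : 0 < θ) (n : ℕ) :
    risingFactorial θ n ≤ (θ+1)^n * n.factorial := by
  induction n with
  | zero => simp [risingFactorial]
  | succ n ih =>
    rw [rf_succ]
    have h1 : (0:ℝ) ≤ θ + n := by positivity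
    have h2 : θ + (n:ℝ) ≤ (θ+1) * (n+1) := by nlinarith
    calc risingFactorial θ n * (θ + n) ≤ ((θ+1)^n * n.factorial) * ((θ+1)*(n+1)) := by
          apply mul_le_mul ih h2 h1 (by positivity)
      _ = (θ+1)^(n+1) * (n+1).factorial := by
          push_cast [Nat.factorial_succ]; ring

lemma sq_le_four_pow (n : ℕ) : ((n:ℝ)+1)^2 ≤ 4 * 4^n := by
  induction n with
  | zero => norm_num
  | succ n ih =>
    push_cast
    calc ((n:ℝ)+1+1)^2 ≤ 4 * ((n:ℝ)+1)^2 := by nlinarith [Nat.cast_nonneg (α := ℝ) n]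
      _ ≤ 4 * (4 * 4^n) := by nlinarith [sq_nonneg ((n:ℝ)+1)]
      _ = 4 * 4^(n+1) := by ring

lemma summable_master {θ : ℝ} (hθ : 0 < θ) {r : ℝ} (hr : 0 ≤ r) :
    Summable (fun n : ℕ => risingFactorial θ n * r^n * ((n:ℝ)+1)^2 / (n.factorial : ℝ)^2) := by
  have h3 : Summable (fun n : ℕ => 4 * (4*(θ+1)*r)^n / (n.factorial : ℝ)) := by
    have := (Real.summable_pow_div_factorial (4*(θ+1)*r)).mul_left 4
    simpa [mul_div_assoc] using this
  refine Summable.of_nonneg_of_le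
    (fun n => by have := (rf_pos hθ n).le; positivity) (fun n => ?_) h3
  have hfac : (0:ℝ) < n.factorial := by positivity
  rw [div_le_div_iff₀ (by positivity) hfac]
  calc risingFactorial θ n * r^n * ((n:ℝ)+1)^2 * n.factorial
      ≤ ((θ+1)^n * n.factorial) * r^n * (4 * 4^n) * n.factorial := by
        apply mul_le_mul_of_nonneg_right _ hfac.le
        apply mul_le_mul _ (sq_le_four_pow n) (by positivity) (by positivity)
        exact mul_le_mul_of_nonneg_right (rf_le hθ n) (by positivity)
    _ = 4 * (4*(θ+1)*r)^n * (n.factorial:ℝ)^2 := by rw [mul_pow, mul_pow]; ring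

/-- coefficients of `S(u) = e^u F(u)`. -/
noncomputable def bkum (θ : ℝ) (m : ℕ) : ℝ :=
  risingFactorial θ (m+1) / ((m.factorial : ℝ) * ((m+1).factorial : ℝ))

noncomputable def Skum (θ u : ℝ) : ℝ := ∑' m : ℕ, bkum θ m * u^(m+1)

lemma bkum_pos {θ : ℝ} (hθ : 0 < θ) (m : ℕ) : 0 < bkum θ m := by
  have := rf_pos hθ (m+1); unfold bkum; positivity

lemma bkum_eq (θ : ℝ) (m : ℕ) :
    bkum θ m = risingFactorial θ (m+1) * ((m:ℝ)+1) / (((m+1).factorial : ℝ))^2 := by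
  unfold bkum
  have h0 : (0:ℝ) < (m.factorial : ℝ) := by positivity
  have hff : ((m+1).factorial : ℝ) = ((m:ℝ)+1) * (m.factorial : ℝ) := by
    push_cast [Nat.factorial_succ]; ring
  rw [hff]; field_simp

lemma summable_kummer {θ : ℝ} (hθ : 0 < θ) (t : ℝ) :
    Summable (fun n : ℕ => risingFactorial θ n * t ^ n / ((n.factorial : ℝ)) ^ 2) := by
  refine Summable.of_norm_bounded (summable_master hθ (abs_nonneg t)) (fun n => ?_)
  have h1 := (rf_pos hθ n).le
  have hfac : (0:ℝ) < n.factorial := by positivity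
  rw [Real.norm_eq_abs, abs_div, abs_mul, abs_of_nonneg h1, abs_pow,
    abs_of_nonneg (by positivity : (0:ℝ) ≤ (n.factorial:ℝ)^2)]
  rw [div_le_div_iff₀ (by positivity) (by positivity)]
  have key : (1:ℝ) ≤ ((n:ℝ)+1)^2 := by nlinarith [Nat.cast_nonneg (α := ℝ) n]
  have hA : (0:ℝ) ≤ risingFactorial θ n * |t|^n := by positivity
  nlinarith [mul_le_mul_of_nonneg_left key (mul_nonneg hA (by positivity : (0:ℝ) ≤ (n.factorial:ℝ)^2)), sq_nonneg ((n.factorial:ℝ))]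

lemma summable_master_shift {θ : ℝ} (hθ : 0 < θ) {r : ℝ} (hr : 0 ≤ r) :
    Summable (fun m : ℕ =>
      risingFactorial θ (m+1) * r^(m+1) * ((m:ℝ)+2)^2 / (((m+1).factorial : ℝ))^2) := by
  have h := (summable_nat_add_iff (f := fun n : ℕ =>
      risingFactorial θ n * r^n * ((n:ℝ)+1)^2 / (n.factorial : ℝ)^2) 1).2 (summable_master hθ hr)
  exact h.congr (fun m => by push_cast; ring_nf)

lemma summable_S {θ : ℝ} (hθ : 0 < θ) (u : ℝ) :
    Summable (fun m : ℕ => bkum θ m * u^(m+1)) := by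
  refine Summable.of_norm_bounded (summable_master_shift hθ (abs_nonneg u)) (fun m => ?_)
  have h1 := (rf_pos hθ (m+1)).le
  have hD : (0:ℝ) < (((m+1).factorial : ℝ))^2 := by positivity
  rw [Real.norm_eq_abs, abs_mul, abs_pow, abs_of_nonneg (bkum_pos hθ m).le, bkum_eq,
    div_mul_eq_mul_div, div_le_div_iff₀ hD hD]
  have key : ((m:ℝ)+1) ≤ ((m:ℝ)+2)^2 := by nlinarith [Nat.cast_nonneg (α := ℝ) m]
  have hA : (0:ℝ) ≤ risingFactorial θ (m+1) * |u|^(m+1) := by positivity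
  nlinarith [mul_le_mul_of_nonneg_left key (mul_nonneg hA hD.le)]

lemma summable_S_deriv {θ : ℝ} (hθ : 0 < θ) {R : ℝ} (hR : 1 ≤ R) :
    Summable (fun m : ℕ => bkum θ m * ((m:ℝ)+1) * R^m) := by
  have hR0 : (0:ℝ) ≤ R := by linarith
  refine Summable.of_nonneg_of_le
    (fun m => by have := (bkum_pos hθ m).le; positivity) (fun m => ?_)
    (summable_master_shift hθ hR0)
  have h1 := (rf_pos hθ (m+1)).le
  have hD : (0:ℝ) < (((m+1).factorial : ℝ))^2 := by positivity
  rw [bkum_eq, div_mul_eq_mul_div, div_mul_eq_mul_div, div_le_div_iff₀ hD hD]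
  have key : ((m:ℝ)+1)^2 ≤ ((m:ℝ)+2)^2 := by nlinarith [Nat.cast_nonneg (α := ℝ) m]
  have hRm : R^m ≤ R^(m+1) := by
    calc R^m = R^m * 1 := by ring
      _ ≤ R^m * R := mul_le_mul_of_nonneg_left hR (by positivity)
      _ = R^(m+1) := by ring
  have h5 : (risingFactorial θ (m+1) * R^m) * ((m:ℝ)+1)^2
      ≤ (risingFactorial θ (m+1) * R^(m+1)) * ((m:ℝ)+2)^2 :=
    mul_le_mul (mul_le_mul_of_nonneg_left hRm h1) key (by positivity) (by positivity)
  nlinarith [mul_le_mul_of_nonneg_right h5 hD.le]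

lemma summable_S_deriv' {θ : ℝ} (hθ : 0 < θ) (u : ℝ) :
    Summable (fun m : ℕ => bkum θ m * ((m:ℝ)+1) * u^m) := by
  refine Summable.of_norm_bounded (summable_S_deriv hθ (le_max_right |u| 1)) (fun m => ?_)
  rw [Real.norm_eq_abs, abs_mul, abs_mul, abs_pow, abs_of_nonneg (bkum_pos hθ m).le,
    abs_of_nonneg (by positivity : (0:ℝ) ≤ (m:ℝ)+1)]
  have : |u|^m ≤ (max |u| 1)^m := pow_le_pow_left₀ (abs_nonneg u) (le_max_left _ _) m
  exact mul_le_mul_of_nonneg_left this (by have := (bkum_pos hθ m).le; positivity)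

lemma hasDerivAt_Skum {θ : ℝ} (hθ : 0 < θ) (u : ℝ) :
    HasDerivAt (Skum θ) (∑' m : ℕ, bkum θ m * ((m:ℝ)+1) * u^m) u := by
  set R : ℝ := max (|u| + 1) 1 with hR
  have hR1 : 1 ≤ R := le_max_right _ _
  have hball : u ∈ Metric.ball (0:ℝ) (|u|+1) := by
    rw [Metric.mem_ball, Real.dist_eq, sub_zero]
    linarith
  have := hasDerivAt_tsum_of_isPreconnected (F := ℝ)
    (u := fun m : ℕ => bkum θ m * ((m:ℝ)+1) * R^m)
    (g := fun (m : ℕ) (z : ℝ) => bkum θ m * z^(m+1))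
    (g' := fun (m : ℕ) (z : ℝ) => bkum θ m * ((m:ℝ)+1) * z^m)
    (summable_S_deriv hθ hR1) (Metric.isOpen_ball) (convex_ball (0:ℝ) (|u|+1)).isPreconnected
    ?_ ?_ hball (summable_S hθ u) hball
  · exact this
  · intro n y _
    have h := (hasDerivAt_pow (n+1) y).const_mul (bkum θ n)
    exact h.congr_deriv (by rw [Nat.add_sub_cancel]; push_cast; ring)
  · intro n y hy
    have hy' : |y| ≤ R := by
      have : |y| < |u| + 1 := by simpa [Real.dist_eq] using hy
      refine le_trans this.le (le_max_left _ _)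
    rw [Real.norm_eq_abs, abs_mul, abs_mul, abs_pow, abs_of_nonneg (bkum_pos hθ n).le,
      abs_of_nonneg (by positivity : (0:ℝ) ≤ (n:ℝ)+1)]
    exact mul_le_mul_of_nonneg_left (pow_le_pow_left₀ (abs_nonneg y) hy' n)
      (by have := (bkum_pos hθ n).le; positivity)

lemma hasDerivAt_kummerM {θ : ℝ} (hθ : 0 < θ) (u : ℝ) :
    HasDerivAt (kummerM θ)
      (∑' n : ℕ, risingFactorial θ n * ((n:ℝ) * u^(n-1)) / (n.factorial : ℝ)^2) u := by
  set R : ℝ := max (|u| + 1) 1 with hRdef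
  have hR1 : 1 ≤ R := le_max_right _ _
  have hR0 : (0:ℝ) ≤ R := by linarith
  have hball : u ∈ Metric.ball (0:ℝ) (|u|+1) := by
    rw [Metric.mem_ball, Real.dist_eq, sub_zero]; linarith
  have hu : Summable (fun n : ℕ =>
      risingFactorial θ n * ((n:ℝ)+1)^2 * R^n / (n.factorial : ℝ)^2) :=
    (summable_master hθ hR0).congr (fun n => by ring_nf)
  have := hasDerivAt_tsum_of_isPreconnected (F := ℝ)
    (u := fun n : ℕ => risingFactorial θ n * ((n:ℝ)+1)^2 * R^n / (n.factorial : ℝ)^2)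
    (g := fun (n : ℕ) (z : ℝ) => risingFactorial θ n * z^n / (n.factorial : ℝ)^2)
    (g' := fun (n : ℕ) (z : ℝ) => risingFactorial θ n * ((n:ℝ) * z^(n-1)) / (n.factorial : ℝ)^2)
    hu (Metric.isOpen_ball) (convex_ball (0:ℝ) (|u|+1)).isPreconnected
    ?_ ?_ hball (summable_kummer hθ u) hball
  · exact this
  · intro n y _
    exact ((hasDerivAt_pow n y).const_mul (risingFactorial θ n)).div_const _
  · intro n y hy
    have hy' : |y| ≤ R := by
      have : |y| < |u| + 1 := by simpa [Real.dist_eq] using hy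
      exact le_trans this.le (le_max_left _ _)
    have h1 := (rf_pos hθ n).le
    rw [Real.norm_eq_abs, abs_div, abs_mul, abs_mul, abs_pow, abs_of_nonneg h1,
      abs_of_nonneg (n.cast_nonneg : (0:ℝ) ≤ n),
      abs_of_nonneg (by positivity : (0:ℝ) ≤ ((n.factorial:ℝ))^2)]
    apply div_le_div_of_nonneg_right ?_ (by positivity)
    have e1 : |y|^(n-1) ≤ R^(n-1) := pow_le_pow_left₀ (abs_nonneg y) hy' _
    have e2 : R^(n-1) ≤ R^n := pow_le_pow_right₀ hR1 (Nat.sub_le n 1)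
    have e3 : (n:ℝ) ≤ ((n:ℝ)+1)^2 := by nlinarith [Nat.cast_nonneg (α := ℝ) n]
    have e4 : (n:ℝ) * |y|^(n-1) ≤ ((n:ℝ)+1)^2 * R^n :=
      mul_le_mul e3 (e1.trans e2) (by positivity) (by positivity)
    nlinarith [mul_le_mul_of_nonneg_left e4 h1]

lemma continuous_kummerM {θ : ℝ} (hθ : 0 < θ) : Continuous (kummerM θ) := by
  rw [continuous_iff_continuousAt]
  exact fun u => (hasDerivAt_kummerM hθ u).continuousAt

lemma rf_zero (θ : ℝ) : risingFactorial θ 0 = 1 := by simp [risingFactorial]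
lemma rf_one (θ : ℝ) : risingFactorial θ 1 = θ := by simp [risingFactorial]

lemma bkum_zero (θ : ℝ) : bkum θ 0 = θ := by
  simp [bkum, rf_one]

lemma bkum_rec {θ : ℝ} (hθ : 0 < θ) (m : ℕ) :
    bkum θ (m+1) * ((m:ℝ)+2) = θ * (risingFactorial θ (m+1) / (((m+1).factorial : ℝ))^2) + bkum θ m := by
  have hp : (0:ℝ) < (m.factorial : ℝ) := by positivity
  have h1 : (((m+1).factorial : ℝ)) = ((m:ℝ)+1) * (m.factorial:ℝ) := by
    push_cast [Nat.factorial_succ]; ring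
  have h2 : (((m+2).factorial : ℝ)) = ((m:ℝ)+2) * (((m:ℝ)+1) * (m.factorial:ℝ)) := by
    push_cast [Nat.factorial_succ]; ring
  have h3 : risingFactorial θ (m+2) = risingFactorial θ (m+1) * (θ + ((m:ℝ)+1)) := by
    rw [show m+2 = (m+1)+1 from rfl, rf_succ]; push_cast; ring
  unfold bkum
  rw [h1, h2, h3]
  field_simp

lemma S_deriv_identity {θ : ℝ} (hθ : 0 < θ) (u : ℝ) :
    ∑' m : ℕ, bkum θ m * ((m:ℝ)+1) * u^m = θ * kummerM θ u + Skum θ u := by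
  have hf : Summable (fun m : ℕ => bkum θ m * ((m:ℝ)+1) * u^m) := summable_S_deriv' hθ u
  have hA : Summable (fun m : ℕ =>
      risingFactorial θ (m+1) * u^(m+1) / (((m+1).factorial : ℝ))^2) :=
    (summable_nat_add_iff (f := fun n : ℕ =>
      risingFactorial θ n * u^n / ((n.factorial : ℝ))^2) 1).2 (summable_kummer hθ u)
  have hB : Summable (fun m : ℕ => bkum θ m * u^(m+1)) := summable_S hθ u
  rw [Summable.tsum_eq_zero_add hf]
  have hk : kummerM θ u = 1 + ∑' m : ℕ,
      risingFactorial θ (m+1) * u^(m+1) / (((m+1).factorial : ℝ))^2 := by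
    unfold kummerM
    rw [Summable.tsum_eq_zero_add (summable_kummer hθ u)]
    simp [rf_zero]
  have hterm : ∀ m : ℕ, bkum θ (m+1) * (((m+1:ℕ):ℝ)+1) * u^(m+1) =
      θ * (risingFactorial θ (m+1) * u^(m+1) / (((m+1).factorial : ℝ))^2)
        + bkum θ m * u^(m+1) := by
    intro m
    have := bkum_rec hθ m
    have expand : bkum θ (m+1) * (((m+1:ℕ):ℝ)+1) * u^(m+1)
        = (bkum θ (m+1) * ((m:ℝ)+2)) * u^(m+1) := by push_cast; ring
    rw [expand, this]; ring
  rw [tsum_congr hterm, Summable.tsum_add (hA.mul_left θ) hB, tsum_mul_left, hk, bkum_zero]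
  unfold Skum
  push_cast
  ring

lemma hasDerivAt_exp_Skum {θ : ℝ} (hθ : 0 < θ) (u : ℝ) :
    HasDerivAt (fun w => Real.exp (-w) * Skum θ w) (θ * (Real.exp (-u) * kummerM θ u)) u := by
  have hexp : HasDerivAt (fun w : ℝ => Real.exp (-w)) (Real.exp (-u) * (-1)) u :=
    (hasDerivAt_neg u).exp
  have h := hexp.mul (hasDerivAt_Skum hθ u)
  exact h.congr_deriv (by rw [S_deriv_identity hθ u]; ring)

lemma hasDerivAt_Fkum {θ : ℝ} (hθ : 0 < θ) (u : ℝ) :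
    HasDerivAt (Fkum θ) (θ * (Real.exp (-u) * kummerM θ u)) u := by
  have hcont : Continuous (fun t : ℝ => Real.exp (-t) * kummerM θ t) :=
    (Real.continuous_exp.comp continuous_neg).mul (continuous_kummerM hθ)
  have h := (intervalIntegral.integral_hasDerivAt_right
    (hcont.intervalIntegrable 0 u)
    (hcont.stronglyMeasurableAtFilter _ _)
    hcont.continuousAt).const_mul θ
  exact h

lemma Skum_zero (θ : ℝ) : Skum θ 0 = 0 := by
  unfold Skum
  have : ∀ m : ℕ, bkum θ m * (0:ℝ)^(m+1) = 0 := fun m => by simp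
  rw [tsum_congr this, tsum_zero]

lemma Fkum_eq_Skum {θ : ℝ} (hθ : 0 < θ) (u : ℝ) :
    Fkum θ u = Real.exp (-u) * Skum θ u := by
  have key : ∀ w : ℝ, (fun w => Fkum θ w - Real.exp (-w) * Skum θ w) w
      = (fun w => Fkum θ w - Real.exp (-w) * Skum θ w) 0 := by
    intro w
    apply is_const_of_deriv_eq_zero (f := fun w => Fkum θ w - Real.exp (-w) * Skum θ w)
    · intro x
      exact ((hasDerivAt_Fkum hθ x).sub (hasDerivAt_exp_Skum hθ x)).differentiableAt
    · intro x
      have := ((hasDerivAt_Fkum hθ x).sub (hasDerivAt_exp_Skum hθ x))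
      exact this.deriv.trans (sub_self _)
  have h0 : Fkum θ 0 - Real.exp (-(0:ℝ)) * Skum θ 0 = 0 := by
    simp [Fkum, Skum_zero]
  have := key u
  simp only at this
  rw [h0] at this
  linarith [this]

lemma beta_intervalIntegrable {θ : ℝ} (hθ : 0 < θ) (m : ℕ) :
    IntervalIntegrable (fun β : ℝ => β^m * (1-β)^(θ-1)) volume 0 1 := by
  have h1 : IntervalIntegrable (fun x : ℝ => x^(θ-1)) volume 0 1 :=
    intervalIntegral.intervalIntegrable_rpow' (by linarith)
  have h2 : IntervalIntegrable (fun x : ℝ => (1-x)^(θ-1)) volume 0 1 := by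
    have := h1.comp_sub_left 1
    simpa using this.symm
  exact h2.continuousOn_mul (continuous_pow m).continuousOn

lemma beta_integrableOn {θ : ℝ} (hθ : 0 < θ) (m : ℕ) :
    IntegrableOn (fun β : ℝ => β^m * (1-β)^(θ-1)) (Set.Ioo 0 1) volume :=
  ((intervalIntegrable_iff_integrableOn_Ioo_of_le zero_le_one).1 (beta_intervalIntegrable hθ m))

lemma rf_gamma {θ : ℝ} (hθ : 0 < θ) (n : ℕ) :
    Real.Gamma (θ + n) = risingFactorial θ n * Real.Gamma θ := by
  induction n with
  | zero => simp [risingFactorial]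
  | succ n ih =>
    have hne : θ + (n:ℝ) ≠ 0 := by positivity
    have : θ + ((n+1 : ℕ):ℝ) = (θ + n) + 1 := by push_cast; ring
    rw [this, Real.Gamma_add_one hne, ih, rf_succ]
    ring

lemma beta_value {θ : ℝ} (hθ : 0 < θ) (m : ℕ) :
    ∫ β in (0:ℝ)..1, β^m * (1-β)^(θ-1) = (m.factorial : ℝ) / risingFactorial θ (m+1) := by
  have hu : (0:ℝ) < ((m:ℂ)+1).re := by simp; positivity
  have hv : (0:ℝ) < ((θ:ℂ)).re := by simpa using hθ
  -- identify the real integral with the complex Beta integral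
  have key : ((∫ β in (0:ℝ)..1, β^m * (1-β)^(θ-1) : ℝ) : ℂ)
      = Complex.betaIntegral ((m:ℂ)+1) (θ:ℂ) := by
    rw [← intervalIntegral.integral_ofReal]
    unfold Complex.betaIntegral
    rw [intervalIntegral.integral_of_le zero_le_one, intervalIntegral.integral_of_le zero_le_one,
      MeasureTheory.integral_Ioc_eq_integral_Ioo, MeasureTheory.integral_Ioc_eq_integral_Ioo]
    apply MeasureTheory.setIntegral_congr_fun measurableSet_Ioo
    intro x hx
    obtain ⟨hx0, hx1⟩ := hx
    have e1 : ((m:ℂ)+1-1) = (m:ℂ) := by ring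
    have e2 : ((x:ℂ))^((m:ℂ)) = ((x^m : ℝ) : ℂ) := by
      rw [Complex.cpow_natCast]; push_cast; ring
    have e3 : ((1:ℂ) - (x:ℂ))^((θ:ℂ)-1) = (((1-x)^(θ-1) : ℝ) : ℂ) := by
      have : ((1:ℂ) - (x:ℂ)) = (((1-x : ℝ)) : ℂ) := by push_cast; ring
      rw [this, show ((θ:ℂ)-1) = (((θ-1 : ℝ)) : ℂ) by push_cast; ring,
        ← Complex.ofReal_cpow (by linarith)]
    simp only [e1, e2, e3]
    push_cast
    ring
  have hg : Complex.Gamma ((m:ℂ)+1) * Complex.Gamma (θ:ℂ)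
      = Complex.Gamma ((m:ℂ)+1+(θ:ℂ)) * Complex.betaIntegral ((m:ℂ)+1) (θ:ℂ) :=
    Complex.Gamma_mul_Gamma_eq_betaIntegral hu hv
  have hgne : Complex.Gamma ((m:ℂ)+1+(θ:ℂ)) ≠ 0 := by
    apply Complex.Gamma_ne_zero_of_re_pos
    simp [Complex.add_re]; positivity
  have hbeta : Complex.betaIntegral ((m:ℂ)+1) (θ:ℂ)
      = Complex.Gamma ((m:ℂ)+1) * Complex.Gamma (θ:ℂ) / Complex.Gamma ((m:ℂ)+1+(θ:ℂ)) := by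
    field_simp [hg]
    rw [hg]; ring
  -- convert Gammas to real
  have hg1 : Complex.Gamma ((m:ℂ)+1) = ((m.factorial : ℝ) : ℂ) := by
    rw [show ((m:ℂ)+1) = (((m+1 : ℕ)):ℂ) by push_cast; ring]
    push_cast
    rw [Complex.Gamma_nat_eq_factorial]
  have hg2 : Complex.Gamma (θ:ℂ) = ((Real.Gamma θ : ℝ) : ℂ) := Complex.Gamma_ofReal θ
  have hg3 : Complex.Gamma ((m:ℂ)+1+(θ:ℂ)) = ((Real.Gamma (θ + (m+1)) : ℝ) : ℂ) := by
    rw [show ((m:ℂ)+1+(θ:ℂ)) = (((θ + (m+1) : ℝ)) : ℂ) by push_cast; ring]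
    exact Complex.Gamma_ofReal _
  rw [hbeta, hg1, hg2, hg3] at key
  have hGθ : Real.Gamma θ ≠ 0 := (Real.Gamma_pos_of_pos hθ).ne'
  have hrf : Real.Gamma (θ + ((m+1 : ℕ):ℝ)) = risingFactorial θ (m+1) * Real.Gamma θ :=
    rf_gamma hθ (m+1)
  have hrf' : Real.Gamma (θ + ((m:ℝ)+1)) = risingFactorial θ (m+1) * Real.Gamma θ := by
    rw [← hrf]; norm_num
  have hrfpos := rf_pos hθ (m+1)
  have : ((∫ β in (0:ℝ)..1, β^m * (1-β)^(θ-1) : ℝ) : ℂ)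
      = (((m.factorial : ℝ) / risingFactorial θ (m+1) : ℝ) : ℂ) := by
    rw [key, hrf']
    push_cast
    rw [div_eq_div_iff]
    · ring
    · simp only [← Complex.ofReal_mul, ne_eq, Complex.ofReal_eq_zero]
      positivity
    · simp only [ne_eq, Complex.ofReal_eq_zero]
      positivity
  exact_mod_cast this

lemma exp_sub_one_eq (x : ℝ) :
    Real.exp x - 1 = ∑' m : ℕ, x^(m+1) / (((m+1).factorial : ℝ)) := by
  have hexp : Real.exp x = ∑' n : ℕ, x^n / (n.factorial : ℝ) := by
    rw [Real.exp_eq_exp_ℝ, NormedSpace.exp_eq_tsum_div]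
  have hs : Summable (fun n : ℕ => x^n / (n.factorial : ℝ)) :=
    Real.summable_pow_div_factorial x
  rw [hexp, Summable.tsum_eq_zero_add hs]
  simp

/-- For `θ > 0`, `a > 0` and `v ≥ 0`,
`∫₀¹ β⁻¹ (1-β)^{θ-1} e^{avβ} F(avβ) dβ = e^{av} − 1`. -/
theorem Fkum_beta_integral (θ : ℝ) (hθ : 0 < θ) (a v : ℝ) (ha : 0 < a) (hv : 0 ≤ v) :
    ∫ β in (0:ℝ)..1, β⁻¹ * (1 - β) ^ (θ - 1) * Real.exp (a * v * β) * Fkum θ (a * v * β) =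
      Real.exp (a * v) - 1 := by
  set x : ℝ := a * v with hxdef
  have hx : 0 ≤ x := by positivity
  have hIoo : ∀ m : ℕ, ∫ β in Set.Ioo (0:ℝ) 1, β^m * (1-β)^(θ-1)
      = (m.factorial : ℝ) / risingFactorial θ (m+1) := by
    intro m
    rw [← MeasureTheory.integral_Ioc_eq_integral_Ioo,
      ← intervalIntegral.integral_of_le zero_le_one, beta_value hθ]
  rw [intervalIntegral.integral_of_le zero_le_one,
    MeasureTheory.integral_Ioc_eq_integral_Ioo]
  have hcongr : ∀ β ∈ Set.Ioo (0:ℝ) 1,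
      β⁻¹ * (1 - β) ^ (θ - 1) * Real.exp (x * β) * Fkum θ (x * β)
      = ∑' m : ℕ, bkum θ m * x^(m+1) * (β^m * (1-β)^(θ-1)) := by
    intro β hβ
    obtain ⟨hβ0, hβ1⟩ := hβ
    rw [Fkum_eq_Skum hθ]
    have hexp : Real.exp (x*β) * (Real.exp (-(x*β)) * Skum θ (x*β)) = Skum θ (x*β) := by
      rw [← mul_assoc, ← Real.exp_add]
      simp
    rw [mul_assoc (β⁻¹ * (1 - β) ^ (θ - 1)), hexp]
    unfold Skum
    rw [← tsum_mul_left]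
    apply tsum_congr
    intro m
    have hβne : β ≠ 0 := ne_of_gt hβ0
    rw [mul_pow]
    field_simp
    ring
  rw [MeasureTheory.setIntegral_congr_fun measurableSet_Ioo hcongr]
  have hint : ∀ m : ℕ, Integrable
      (fun β => bkum θ m * x^(m+1) * (β^m * (1-β)^(θ-1)))
      (volume.restrict (Set.Ioo (0:ℝ) 1)) :=
    fun m => (beta_integrableOn hθ m).const_mul _
  have hnorm : ∀ m : ℕ, (∫ β in Set.Ioo (0:ℝ) 1,
      ‖bkum θ m * x^(m+1) * (β^m * (1-β)^(θ-1))‖) = x^(m+1) / (((m+1).factorial : ℝ)) := by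
    intro m
    have heq : ∀ β ∈ Set.Ioo (0:ℝ) 1,
        ‖bkum θ m * x^(m+1) * (β^m * (1-β)^(θ-1))‖
        = bkum θ m * x^(m+1) * (β^m * (1-β)^(θ-1)) := by
      intro β hβ
      obtain ⟨hβ0, hβ1⟩ := hβ
      have h1 : (0:ℝ) ≤ (1-β)^(θ-1) := Real.rpow_nonneg (by linarith) _
      have h2 := (bkum_pos hθ m).le
      rw [Real.norm_eq_abs, abs_of_nonneg]
      positivity
    rw [MeasureTheory.setIntegral_congr_fun measurableSet_Ioo heq,
      MeasureTheory.integral_const_mul, hIoo]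
    have hrf := rf_pos hθ (m+1)
    have hf1 : (0:ℝ) < (m.factorial : ℝ) := by positivity
    have hf2 : (0:ℝ) < ((m+1).factorial : ℝ) := by positivity
    unfold bkum
    field_simp
  have hsum : Summable (fun m : ℕ => ∫ β in Set.Ioo (0:ℝ) 1,
      ‖bkum θ m * x^(m+1) * (β^m * (1-β)^(θ-1))‖) := by
    apply Summable.congr _ (fun m => (hnorm m).symm)
    exact (summable_nat_add_iff 1).2 (Real.summable_pow_div_factorial x)
  rw [← MeasureTheory.integral_tsum_of_summable_integral_norm hint hsum]
  have : ∀ m : ℕ, (∫ β in Set.Ioo (0:ℝ) 1, bkum θ m * x^(m+1) * (β^m * (1-β)^(θ-1)))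
      = x^(m+1) / (((m+1).factorial : ℝ)) := by
    intro m
    rw [MeasureTheory.integral_const_mul, hIoo]
    have hrf := rf_pos hθ (m+1)
    have hf1 : (0:ℝ) < (m.factorial : ℝ) := by positivity
    have hf2 : (0:ℝ) < ((m+1).factorial : ℝ) := by positivity
    unfold bkum
    field_simp
  rw [tsum_congr this, ← exp_sub_one_eq]
end

section
/- Let θ > 0 and F(u) := θ ∫₀^u e^{-t} ₁F₁(θ,1,t) dt. There exists a constant C > 0 (depending on θ) such that for all u > 0: F(u) ≤ C·u if u ≤ 1, and F(u) ≤ C·u^θ if u ≥ 1. -/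
open MeasureTheory

namespace FkumAux

noncomputable def harm (n : ℕ) : ℝ := ∑ i ∈ Finset.range n, (1:ℝ)/(i+1)

lemma harm_zero : harm 0 = 0 := by simp [harm]

lemma harm_succ (n : ℕ) : harm (n+1) = harm n + 1/((n:ℝ)+1) := by
  simp [harm, Finset.sum_range_succ]

lemma harm_nonneg (n : ℕ) : 0 ≤ harm n :=
  Finset.sum_nonneg fun i _ => by positivity

lemma log_le_harm (n : ℕ) : Real.log ((n:ℝ)+1) ≤ harm n := by
  induction n with
  | zero => simp [harm_zero]
  | succ n ih =>
    have h2 : (0:ℝ) < ((n:ℝ)+2)/((n:ℝ)+1) := by positivity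
    have key := Real.log_le_sub_one_of_pos h2
    rw [Real.log_div (by positivity) (by positivity)] at key
    have e : ((n:ℝ)+2)/((n:ℝ)+1) - 1 = 1/((n:ℝ)+1) := by field_simp; norm_num
    rw [harm_succ]
    push_cast
    have : Real.log ((n:ℝ)+1+1) ≤ Real.log ((n:ℝ)+1) + 1/((n:ℝ)+1) := by
      have : ((n:ℝ)+1+1) = (n:ℝ)+2 := by ring
      rw [this]; linarith
    linarith

lemma harm_le (n : ℕ) : harm n ≤ 1 + Real.log ((n:ℝ)+1) := by
  have main : ∀ m : ℕ, harm (m+1) ≤ 1 + Real.log ((m:ℝ)+1) := by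
    intro m
    induction m with
    | zero => simp [harm_succ, harm_zero]
    | succ m ih =>
      have h1 : (0:ℝ) < ((m:ℝ)+1)/((m:ℝ)+2) := by positivity
      have key := Real.log_le_sub_one_of_pos h1
      rw [Real.log_div (by positivity) (by positivity)] at key
      have e : ((m:ℝ)+1)/((m:ℝ)+2) - 1 = -(1/((m:ℝ)+2)) := by field_simp; ring
      rw [harm_succ]
      push_cast
      have : Real.log ((m:ℝ)+1) + 1/((m:ℝ)+1+1) ≤ Real.log ((m:ℝ)+1+1) := by
        have e2 : ((m:ℝ)+1+1) = (m:ℝ)+2 := by ring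
        rw [e2]; linarith
      linarith [ih]
  cases n with
  | zero => simp [harm_zero]
  | succ m =>
    have h := main m
    have hlog : Real.log ((m:ℝ)+1) ≤ Real.log ((m:ℝ)+1+1) :=
      Real.log_le_log (by positivity) (by linarith)
    push_cast
    linarith

lemma rf_pos {θ : ℝ} (hθ : 0 < θ) (n : ℕ) : 0 < risingFactorial θ n :=
  Finset.prod_pos fun i _ => by positivity

lemma rf_le {θ : ℝ} (hθ : 0 < θ) (n : ℕ) :
    risingFactorial θ n ≤ (n.factorial : ℝ) * Real.exp ((θ-1) * harm n) := by
  induction n with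
  | zero => simp [risingFactorial, harm_zero]
  | succ n ih =>
    have hstep : risingFactorial θ (n+1) = risingFactorial θ n * (θ + n) := by
      rw [risingFactorial, Finset.prod_range_succ]; rfl
    have h1 : (0:ℝ) < (n:ℝ)+1 := by positivity
    have key : θ + n ≤ ((n:ℝ)+1) * Real.exp ((θ-1)/((n:ℝ)+1)) := by
      have hb := Real.add_one_le_exp ((θ-1)/((n:ℝ)+1))
      have e : θ + n = ((n:ℝ)+1) * ((θ-1)/((n:ℝ)+1) + 1) := by field_simp; ring
      rw [e]
      exact mul_le_mul_of_nonneg_left hb h1.le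
    rw [hstep]
    calc risingFactorial θ n * (θ + n)
        ≤ ((n.factorial:ℝ) * Real.exp ((θ-1)*harm n)) * (((n:ℝ)+1) * Real.exp ((θ-1)/((n:ℝ)+1))) := by
          apply mul_le_mul ih key (by positivity) (by positivity)
    _ = ((n+1).factorial : ℝ) * Real.exp ((θ-1)*harm (n+1)) := by
        rw [harm_succ, Nat.factorial_succ, mul_add, Real.exp_add]
        push_cast
        ring


lemma exp_tsum (t : ℝ) : Real.exp t = ∑' n : ℕ, t ^ n / (n.factorial : ℝ) := by
  rw [Real.exp_eq_exp_ℝ, NormedSpace.exp_eq_tsum_div]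

/-- `rf θ n ≤ n! (n+1)^{θ-1}` for `θ ≤ 1`. -/
lemma rf_le_one {θ : ℝ} (hθ : 0 < θ) (hθ1 : θ ≤ 1) (n : ℕ) :
    risingFactorial θ n ≤ (n.factorial : ℝ) * ((n:ℝ)+1) ^ (θ-1) := by
  refine (rf_le hθ n).trans ?_
  have h1 : (θ-1) * harm n ≤ (θ-1) * Real.log ((n:ℝ)+1) :=
    mul_le_mul_of_nonpos_left (log_le_harm n) (by linarith)
  have h2 : ((n:ℝ)+1) ^ (θ-1) = Real.exp ((θ-1) * Real.log ((n:ℝ)+1)) := by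
    rw [Real.rpow_def_of_pos (by positivity), mul_comm]
  rw [h2]
  exact mul_le_mul_of_nonneg_left (Real.exp_le_exp.2 h1) (by positivity)

/-- `rf θ n ≤ n! e^{θ-1} (n+1)^{θ-1}` for `θ ≥ 1`. -/
lemma rf_ge_one {θ : ℝ} (hθ1 : 1 ≤ θ) (n : ℕ) :
    risingFactorial θ n ≤ (n.factorial : ℝ) * (Real.exp (θ-1) * ((n:ℝ)+1) ^ (θ-1)) := by
  have hθ : 0 < θ := by linarith
  refine (rf_le hθ n).trans ?_
  have h1 : (θ-1) * harm n ≤ (θ-1) * (1 + Real.log ((n:ℝ)+1)) :=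
    mul_le_mul_of_nonneg_left (harm_le n) (by linarith)
  have h2 : Real.exp (θ-1) * ((n:ℝ)+1) ^ (θ-1)
      = Real.exp ((θ-1) * (1 + Real.log ((n:ℝ)+1))) := by
    rw [Real.rpow_def_of_pos (by positivity), ← Real.exp_add, mul_comm (Real.log _), mul_add,
      mul_one]
  rw [h2]
  exact mul_le_mul_of_nonneg_left (Real.exp_le_exp.2 h1) (by positivity)

/-- crude polynomial bound valid for all `θ > 0`. -/
lemma rf_le_poly {θ : ℝ} (hθ : 0 < θ) (n : ℕ) :
    risingFactorial θ n
      ≤ (n.factorial : ℝ) * (Real.exp |θ-1| * ((n:ℝ)+1) ^ (⌈|θ-1|⌉₊ : ℕ)) := by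
  refine (rf_le hθ n).trans ?_
  have h1 : (θ-1) * harm n ≤ |θ-1| * (1 + Real.log ((n:ℝ)+1)) := by
    calc (θ-1) * harm n ≤ |θ-1| * harm n :=
          mul_le_mul_of_nonneg_right (le_abs_self _) (harm_nonneg n)
    _ ≤ |θ-1| * (1 + Real.log ((n:ℝ)+1)) :=
          mul_le_mul_of_nonneg_left (harm_le n) (abs_nonneg _)
  have h2 : Real.exp ((θ-1) * harm n) ≤ Real.exp |θ-1| * ((n:ℝ)+1) ^ (|θ-1| : ℝ) := by
    rw [Real.rpow_def_of_pos (by positivity), ← Real.exp_add]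
    apply Real.exp_le_exp.2
    rw [mul_comm (Real.log _)]
    linarith [h1]
  have h3 : ((n:ℝ)+1) ^ (|θ-1| : ℝ) ≤ ((n:ℝ)+1) ^ ((⌈|θ-1|⌉₊ : ℕ) : ℝ) :=
    Real.rpow_le_rpow_of_exponent_le (by norm_num) (Nat.le_ceil _)
  have h4 : ((n:ℝ)+1) ^ ((⌈|θ-1|⌉₊ : ℕ) : ℝ) = ((n:ℝ)+1) ^ (⌈|θ-1|⌉₊ : ℕ) :=
    Real.rpow_natCast _ _
  have h5 : Real.exp ((θ-1) * harm n) ≤ Real.exp |θ-1| * ((n:ℝ)+1) ^ (⌈|θ-1|⌉₊ : ℕ) := by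
    refine h2.trans ?_
    rw [← h4]
    exact mul_le_mul_of_nonneg_left h3 (Real.exp_nonneg _)
  exact mul_le_mul_of_nonneg_left h5 (by positivity)

lemma add_le_mul_two_pow (c : ℝ) (hc : 0 ≤ c) (n : ℕ) : (n:ℝ) + c ≤ (c+1) * 2 ^ n := by
  induction n with
  | zero => simp
  | succ n ih =>
    have h1 : (1:ℝ) ≤ (c+1) * 2 ^ n := by
      have : (1:ℝ) ≤ 2 ^ n := one_le_pow₀ (by norm_num)
      nlinarith
    push_cast
    calc (n:ℝ) + 1 + c ≤ (c+1) * 2 ^ n + (c+1) * 2 ^ n := by push_cast at ih ⊢; linarith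
    _ = (c+1) * 2 ^ (n+1) := by ring

lemma summable_poly (m : ℕ) {c t : ℝ} (hc : 0 ≤ c) (ht : 0 ≤ t) :
    Summable (fun n : ℕ => ((n:ℝ)+c) ^ m * t ^ n / (n.factorial : ℝ)) := by
  apply Summable.of_nonneg_of_le
    (f := fun n : ℕ => (c+1) ^ m * ((2 ^ m * t) ^ n / (n.factorial : ℝ)))
  · intro n
    have h0 : (0:ℝ) ≤ (n:ℝ) + c := by positivity
    have h1 : (0:ℝ) ≤ t ^ n := pow_nonneg ht n
    positivity
  · intro n
    have hb : ((n:ℝ)+c) ^ m ≤ ((c+1) * 2 ^ n) ^ m :=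
      pow_le_pow_left₀ (by positivity) (add_le_mul_two_pow c hc n) m
    have hfac : (0:ℝ) < (n.factorial : ℝ) := by exact_mod_cast n.factorial_pos
    rw [div_le_iff₀ hfac]
    calc ((n:ℝ)+c) ^ m * t ^ n ≤ ((c+1) * 2 ^ n) ^ m * t ^ n :=
          mul_le_mul_of_nonneg_right hb (pow_nonneg ht n)
    _ = (c+1) ^ m * ((2 ^ m * t) ^ n) := by
          rw [mul_pow, mul_pow, pow_right_comm]; ring
    _ = (c+1) ^ m * ((2 ^ m * t) ^ n / (n.factorial : ℝ)) * (n.factorial : ℝ) := by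
          field_simp
  · exact (Real.summable_pow_div_factorial _).mul_left _

lemma moment (m : ℕ) : ∀ j t : ℝ, 1 ≤ j → 0 ≤ t →
    ∑' n : ℕ, ((n:ℝ)+j) ^ m * t ^ n / (n.factorial : ℝ)
      ≤ (t + j + m - 1) ^ m * Real.exp t := by
  induction m with
  | zero =>
    intro j t hj ht
    simp only [pow_zero, one_mul]
    rw [← exp_tsum]
  | succ m ih =>
    intro j t hj ht
    have hj0 : (0:ℝ) ≤ j := by linarith
    have hsum1 : Summable (fun n : ℕ => ((n:ℝ)+j) ^ (m+1) * t ^ n / (n.factorial : ℝ)) :=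
      summable_poly (m+1) hj0 ht
    have hsum2 : Summable (fun n : ℕ => ((n:ℝ)+j) ^ m * t ^ n / (n.factorial : ℝ)) :=
      summable_poly m hj0 ht
    have hsumN : Summable (fun n : ℕ => (n:ℝ) * (((n:ℝ)+j) ^ m * t ^ n / (n.factorial : ℝ))) := by
      apply Summable.of_nonneg_of_le (f := fun n : ℕ => ((n:ℝ)+j) ^ (m+1) * t ^ n / (n.factorial : ℝ))
      · intro n
        have h1 : (0:ℝ) ≤ (n:ℝ)+j := by positivity
        have h2 : (0:ℝ) ≤ t ^ n := pow_nonneg ht n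
        positivity
      · intro n
        have h1 : (0:ℝ) ≤ ((n:ℝ)+j) ^ m := by positivity
        have h2 : (n:ℝ) ≤ (n:ℝ)+j := by linarith
        have h3 : (0:ℝ) ≤ t ^ n / (n.factorial : ℝ) := by positivity
        calc (n:ℝ) * (((n:ℝ)+j) ^ m * t ^ n / (n.factorial : ℝ))
            = ((n:ℝ) * ((n:ℝ)+j) ^ m) * (t ^ n / (n.factorial : ℝ)) := by ring
        _ ≤ (((n:ℝ)+j) * ((n:ℝ)+j) ^ m) * (t ^ n / (n.factorial : ℝ)) := by
            apply mul_le_mul_of_nonneg_right (mul_le_mul_of_nonneg_right h2 h1) h3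
        _ = ((n:ℝ)+j) ^ (m+1) * t ^ n / (n.factorial : ℝ) := by
            rw [← pow_succ']; ring
      · exact hsum1
    have split : (fun n : ℕ => ((n:ℝ)+j) ^ (m+1) * t ^ n / (n.factorial : ℝ))
        = fun n : ℕ => (n:ℝ) * (((n:ℝ)+j) ^ m * t ^ n / (n.factorial : ℝ))
          + j * (((n:ℝ)+j) ^ m * t ^ n / (n.factorial : ℝ)) := by
      funext n
      rw [pow_succ]
      ring
    rw [split, Summable.tsum_add hsumN (hsum2.mul_left j), tsum_mul_left]
    -- first sum equals t * S m (j+1)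
    have shift : ∑' n : ℕ, (n:ℝ) * (((n:ℝ)+j) ^ m * t ^ n / (n.factorial : ℝ))
        = t * ∑' n : ℕ, ((n:ℝ)+(j+1)) ^ m * t ^ n / (n.factorial : ℝ) := by
      rw [Summable.tsum_eq_zero_add hsumN]
      simp only [Nat.cast_zero, zero_mul, zero_add]
      rw [← tsum_mul_left]
      congr 1
      funext n
      have hfac : ((n.factorial : ℝ)) ≠ 0 := by
        exact_mod_cast n.factorial_ne_zero
      have hfs : (((n+1).factorial : ℝ)) = ((n:ℝ)+1) * (n.factorial : ℝ) := by
        rw [Nat.factorial_succ]; push_cast; ring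
      push_cast
      rw [hfs]
      have h1 : ((n:ℝ)+1) ≠ 0 := by positivity
      field_simp
      ring
    rw [shift]
    have ih1 := ih (j+1) t (by linarith) ht
    have ih2 := ih j t hj ht
    have hbase : (0:ℝ) ≤ t + j + m - 1 := by
      have : (0:ℝ) ≤ (m:ℕ) := by positivity
      have hm : (0:ℝ) ≤ (m:ℝ) := by positivity
      linarith
    have hpow : (t + j + (m:ℝ) - 1) ^ m ≤ (t + j + (m:ℝ)) ^ m :=
      pow_le_pow_left₀ hbase (by linarith) m
    have e1 : t + (j+1) + (m:ℝ) - 1 = t + j + (m:ℝ) := by ring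
    rw [e1] at ih1
    have goal_e : t + j + ((m:ℕ)+1 : ℝ) - 1 = t + j + (m:ℝ) := by push_cast; ring
    have final : t * ∑' n : ℕ, ((n:ℝ)+(j+1)) ^ m * t ^ n / (n.factorial : ℝ)
          + j * ∑' n : ℕ, ((n:ℝ)+j) ^ m * t ^ n / (n.factorial : ℝ)
        ≤ (t + j + (m:ℝ)) ^ (m+1) * Real.exp t := by
      have b1 : t * ∑' n : ℕ, ((n:ℝ)+(j+1)) ^ m * t ^ n / (n.factorial : ℝ)
          ≤ t * ((t + j + (m:ℝ)) ^ m * Real.exp t) := mul_le_mul_of_nonneg_left ih1 ht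
      have b2 : j * ∑' n : ℕ, ((n:ℝ)+j) ^ m * t ^ n / (n.factorial : ℝ)
          ≤ j * ((t + j + (m:ℝ)) ^ m * Real.exp t) := by
        refine mul_le_mul_of_nonneg_left (ih2.trans ?_) hj0
        exact mul_le_mul_of_nonneg_right hpow (Real.exp_nonneg t)
      calc _ ≤ t * ((t + j + (m:ℝ)) ^ m * Real.exp t) + j * ((t + j + (m:ℝ)) ^ m * Real.exp t) :=
            add_le_add b1 b2
      _ = (t + j) * ((t + j + (m:ℝ)) ^ m * Real.exp t) := by ring
      _ ≤ (t + j + (m:ℝ)) * ((t + j + (m:ℝ)) ^ m * Real.exp t) := by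
          have hm : (0:ℝ) ≤ (m:ℝ) := by positivity
          have hx : (0:ℝ) ≤ (t + j + (m:ℝ)) ^ m * Real.exp t := by
            apply mul_nonneg (pow_nonneg (by linarith) m) (Real.exp_nonneg t)
          nlinarith
      _ = (t + j + (m:ℝ)) ^ (m+1) * Real.exp t := by rw [pow_succ]; ring
    calc _ ≤ (t + j + (m:ℝ)) ^ (m+1) * Real.exp t := final
    _ = (t + j + ((m+1:ℕ):ℝ) - 1) ^ (m+1) * Real.exp t := by rw [show t + j + ((m+1:ℕ):ℝ) - 1 = t + j + (m:ℝ) by push_cast; ring]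


end FkumAux

namespace FkumAux

lemma term_le {θ t D : ℝ} {n : ℕ} (h : risingFactorial θ n ≤ (n.factorial : ℝ) * D)
    (ht : 0 ≤ t) :
    risingFactorial θ n * t ^ n / ((n.factorial : ℝ)) ^ 2 ≤ D * (t ^ n / (n.factorial : ℝ)) := by
  have hfac : (0:ℝ) < (n.factorial : ℝ) := by exact_mod_cast n.factorial_pos
  have h1 : risingFactorial θ n * t ^ n ≤ ((n.factorial : ℝ) * D) * t ^ n :=
    mul_le_mul_of_nonneg_right h (pow_nonneg ht n)
  calc risingFactorial θ n * t ^ n / ((n.factorial : ℝ)) ^ 2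
      ≤ ((n.factorial : ℝ) * D) * t ^ n / ((n.factorial : ℝ)) ^ 2 := by gcongr
  _ = D * (t ^ n / (n.factorial : ℝ)) := by field_simp

lemma kummer_term_nonneg {θ t : ℝ} (hθ : 0 < θ) (ht : 0 ≤ t) (n : ℕ) :
    0 ≤ risingFactorial θ n * t ^ n / ((n.factorial : ℝ)) ^ 2 := by
  have h1 := (rf_pos hθ n).le
  have h2 : (0:ℝ) ≤ t ^ n := pow_nonneg ht n
  positivity

lemma kummer_summable {θ t : ℝ} (hθ : 0 < θ) (ht : 0 ≤ t) :
    Summable (fun n : ℕ => risingFactorial θ n * t ^ n / ((n.factorial : ℝ)) ^ 2) := by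
  apply Summable.of_nonneg_of_le (kummer_term_nonneg hθ ht)
    (f := fun n : ℕ => Real.exp |θ-1| * (((n:ℝ)+1) ^ (⌈|θ-1|⌉₊ : ℕ) * t ^ n / (n.factorial : ℝ)))
  · intro n
    calc risingFactorial θ n * t ^ n / ((n.factorial : ℝ)) ^ 2
        ≤ (Real.exp |θ-1| * ((n:ℝ)+1) ^ (⌈|θ-1|⌉₊ : ℕ)) * (t ^ n / (n.factorial : ℝ)) :=
          term_le (rf_le_poly hθ n) ht
    _ = Real.exp |θ-1| * (((n:ℝ)+1) ^ (⌈|θ-1|⌉₊ : ℕ) * t ^ n / (n.factorial : ℝ)) := by ring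
  · exact (summable_poly _ (by norm_num) ht).mul_left _

lemma kummer_nonneg {θ t : ℝ} (hθ : 0 < θ) (ht : 0 ≤ t) : 0 ≤ kummerM θ t :=
  tsum_nonneg (kummer_term_nonneg hθ ht)

lemma kummer_mono {θ s t : ℝ} (hθ : 0 < θ) (hs : 0 ≤ s) (hst : s ≤ t) :
    kummerM θ s ≤ kummerM θ t := by
  apply Summable.tsum_le_tsum _ (kummer_summable hθ hs) (kummer_summable hθ (hs.trans hst))
  intro n
  have h1 := (rf_pos hθ n).le
  gcongr

lemma one_le_kummer_one {θ : ℝ} (hθ : 0 < θ) : 1 ≤ kummerM θ 1 := by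
  have h := Summable.le_tsum (kummer_summable hθ (zero_le_one)) 0
    (fun j _ => kummer_term_nonneg hθ zero_le_one j)
  have h0 : risingFactorial θ 0 * (1:ℝ) ^ 0 / ((Nat.factorial 0 : ℝ)) ^ 2 = 1 := by
    simp [risingFactorial]
  exact le_trans (le_of_eq h0.symm) h

lemma tail_le_one {θ : ℝ} (hθ : 0 < θ) (hθ1 : θ ≤ 1) {t : ℝ} (ht : 0 < t) :
    kummerM θ t ≤ 2 * Real.exp t * t ^ (θ-1) := by
  have hsumA : Summable (fun n : ℕ => t ^ n / (n.factorial : ℝ)) :=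
    Real.summable_pow_div_factorial t
  have hsumB : Summable (fun n : ℕ => t ^ (n+1) / (((n+1).factorial : ℝ))) :=
    hsumA.comp_injective Nat.succ_injective
  have key : ∀ n : ℕ, risingFactorial θ n * t ^ n / ((n.factorial : ℝ)) ^ 2
      ≤ t ^ (θ-1) * (t ^ n / (n.factorial : ℝ)) + t ^ (θ-1) * (t ^ (n+1) / (((n+1).factorial : ℝ))) := by
    intro n
    have hn1 : (0:ℝ) < (n:ℝ)+1 := by positivity
    have hx : (0:ℝ) < t/((n:ℝ)+1) := by positivity
    have h1 : (t/((n:ℝ)+1)) ^ ((1:ℝ)-θ) ≤ 1 + t/((n:ℝ)+1) := by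
      rcases le_total (t/((n:ℝ)+1)) 1 with h | h
      · exact (Real.rpow_le_one hx.le h (by linarith)).trans (by linarith)
      · have h2 := Real.rpow_le_rpow_of_exponent_le h (show (1:ℝ)-θ ≤ 1 by linarith)
        rw [Real.rpow_one] at h2
        linarith
    have h2 : ((n:ℝ)+1) ^ (θ-1) = t ^ (θ-1) * (t/((n:ℝ)+1)) ^ ((1:ℝ)-θ) := by
      rw [Real.div_rpow ht.le hn1.le, mul_div_assoc', ← Real.rpow_add ht]
      norm_num
      rw [← Real.rpow_neg hn1.le, neg_sub]
    have hrp : ((n:ℝ)+1) ^ (θ-1) ≤ t ^ (θ-1) * (1 + t/((n:ℝ)+1)) := by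
      rw [h2]
      exact mul_le_mul_of_nonneg_left h1 (Real.rpow_nonneg ht.le _)
    calc risingFactorial θ n * t ^ n / ((n.factorial : ℝ)) ^ 2
        ≤ ((n:ℝ)+1) ^ (θ-1) * (t ^ n / (n.factorial : ℝ)) := term_le (rf_le_one hθ hθ1 n) ht.le
    _ ≤ (t ^ (θ-1) * (1 + t/((n:ℝ)+1))) * (t ^ n / (n.factorial : ℝ)) := by
        apply mul_le_mul_of_nonneg_right hrp
        positivity
    _ = t ^ (θ-1) * (t ^ n / (n.factorial : ℝ)) + t ^ (θ-1) * (t ^ (n+1) / (((n+1).factorial : ℝ))) := by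
        have hfs : (((n+1).factorial : ℝ)) = ((n:ℝ)+1) * (n.factorial : ℝ) := by
          rw [Nat.factorial_succ]; push_cast; ring
        have hfac : ((n.factorial : ℝ)) ≠ 0 := by
          have : (0:ℝ) < (n.factorial : ℝ) := by exact_mod_cast n.factorial_pos
          linarith
        rw [hfs]
        field_simp
        ring
  have hmaj : Summable (fun n : ℕ => t ^ (θ-1) * (t ^ n / (n.factorial : ℝ))
      + t ^ (θ-1) * (t ^ (n+1) / (((n+1).factorial : ℝ)))) :=
    (hsumA.mul_left _).add (hsumB.mul_left _)
  have hb := Summable.tsum_le_tsum key (kummer_summable hθ ht.le) hmaj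
  rw [Summable.tsum_add (hsumA.mul_left _) (hsumB.mul_left _), tsum_mul_left, tsum_mul_left] at hb
  have eA : ∑' n : ℕ, t ^ n / (n.factorial : ℝ) = Real.exp t := (exp_tsum t).symm
  have eB : ∑' n : ℕ, t ^ (n+1) / (((n+1).factorial : ℝ)) = Real.exp t - 1 := by
    have h0 := Summable.tsum_eq_zero_add hsumA
    rw [← exp_tsum] at h0
    simp only [pow_zero, Nat.factorial_zero, Nat.cast_one, div_one] at h0
    linarith
  rw [eA, eB] at hb
  have hp : (0:ℝ) ≤ t ^ (θ-1) := Real.rpow_nonneg ht.le _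
  calc kummerM θ t ≤ t ^ (θ-1) * Real.exp t + t ^ (θ-1) * (Real.exp t - 1) := hb
  _ ≤ 2 * Real.exp t * t ^ (θ-1) := by nlinarith

lemma tail_ge_one {θ : ℝ} (hθ1 : 1 ≤ θ) {t : ℝ} (ht : 1 ≤ t) :
    kummerM θ t ≤ (Real.exp (θ-1) * (1 + ((⌈θ-1⌉₊:ℝ)+1) ^ (⌈θ-1⌉₊ : ℕ))) * Real.exp t * t ^ (θ-1) := by
  set M : ℕ := ⌈θ-1⌉₊ with hM
  have ht0 : (0:ℝ) < t := by linarith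
  have hθ0 : (0:ℝ) < θ := by linarith
  have htM : (0:ℝ) < t ^ M := pow_pos ht0 M
  have hsumA : Summable (fun n : ℕ => t ^ n / (n.factorial : ℝ)) :=
    Real.summable_pow_div_factorial t
  have hsumP : Summable (fun n : ℕ => ((n:ℝ)+1) ^ M * t ^ n / (n.factorial : ℝ)) :=
    summable_poly M (by norm_num) ht0.le
  have key : ∀ n : ℕ, risingFactorial θ n * t ^ n / ((n.factorial : ℝ)) ^ 2
      ≤ (Real.exp (θ-1) * t ^ (θ-1)) * (t ^ n / (n.factorial : ℝ))
        + (Real.exp (θ-1) * t ^ (θ-1) / t ^ M) * (((n:ℝ)+1) ^ M * t ^ n / (n.factorial : ℝ)) := by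
    intro n
    have hn1 : (0:ℝ) < (n:ℝ)+1 := by positivity
    have hx : (0:ℝ) < ((n:ℝ)+1)/t := by positivity
    have hxp : (((n:ℝ)+1)/t) ^ (θ-1) ≤ 1 + (((n:ℝ)+1)/t) ^ M := by
      rcases le_total (((n:ℝ)+1)/t) 1 with h | h
      · have h1' : (((n:ℝ)+1)/t) ^ (θ-1) ≤ 1 := Real.rpow_le_one hx.le h (by linarith)
        have h2 : (0:ℝ) ≤ (((n:ℝ)+1)/t) ^ M := pow_nonneg hx.le M
        linarith
      · have h2 := Real.rpow_le_rpow_of_exponent_le h (Nat.le_ceil (θ-1))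
        rw [Real.rpow_natCast] at h2
        rw [← hM] at h2
        linarith
    have h2 : ((n:ℝ)+1) ^ (θ-1) = t ^ (θ-1) * ((((n:ℝ)+1)/t) ^ (θ-1)) := by
      rw [Real.div_rpow hn1.le ht0.le, mul_div_cancel₀]
      exact (Real.rpow_pos_of_pos ht0 _).ne'
    have h3 : ((n:ℝ)+1) ^ (θ-1) ≤ t ^ (θ-1) + (t ^ (θ-1) / t ^ M) * ((n:ℝ)+1) ^ M := by
      rw [h2]
      have hstep : t ^ (θ-1) * ((((n:ℝ)+1)/t) ^ (θ-1)) ≤ t ^ (θ-1) * (1 + (((n:ℝ)+1)/t) ^ M) :=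
        mul_le_mul_of_nonneg_left hxp (Real.rpow_nonneg ht0.le _)
      refine hstep.trans_eq ?_
      rw [div_pow]
      field_simp
    calc risingFactorial θ n * t ^ n / ((n.factorial : ℝ)) ^ 2
        ≤ (Real.exp (θ-1) * ((n:ℝ)+1) ^ (θ-1)) * (t ^ n / (n.factorial : ℝ)) :=
          term_le (rf_ge_one hθ1 n) ht0.le
    _ ≤ (Real.exp (θ-1) * (t ^ (θ-1) + (t ^ (θ-1) / t ^ M) * ((n:ℝ)+1) ^ M)) * (t ^ n / (n.factorial : ℝ)) := by
          apply mul_le_mul_of_nonneg_right _ (by positivity)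
          exact mul_le_mul_of_nonneg_left h3 (Real.exp_nonneg _)
    _ = (Real.exp (θ-1) * t ^ (θ-1)) * (t ^ n / (n.factorial : ℝ))
        + (Real.exp (θ-1) * t ^ (θ-1) / t ^ M) * (((n:ℝ)+1) ^ M * t ^ n / (n.factorial : ℝ)) := by
          ring
  have hmaj : Summable (fun n : ℕ => (Real.exp (θ-1) * t ^ (θ-1)) * (t ^ n / (n.factorial : ℝ))
      + (Real.exp (θ-1) * t ^ (θ-1) / t ^ M) * (((n:ℝ)+1) ^ M * t ^ n / (n.factorial : ℝ))) :=
    (hsumA.mul_left _).add (hsumP.mul_left _)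
  have hb := Summable.tsum_le_tsum key (kummer_summable hθ0 ht0.le) hmaj
  rw [Summable.tsum_add (hsumA.mul_left _) (hsumP.mul_left _), tsum_mul_left, tsum_mul_left, ← exp_tsum] at hb
  have hmom := moment M 1 t le_rfl ht0.le
  have hmom' : ∑' n : ℕ, ((n:ℝ)+1) ^ M * t ^ n / (n.factorial : ℝ) ≤ (t + (M:ℝ)) ^ M * Real.exp t := by
    have e : t + 1 + (M:ℝ) - 1 = t + (M:ℝ) := by ring
    rw [e] at hmom
    exact hmom
  have hTM : (t + (M:ℝ)) ^ M ≤ ((M:ℝ)+1) ^ M * t ^ M := by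
    have h1 : t + (M:ℝ) ≤ ((M:ℝ)+1) * t := by nlinarith [Nat.cast_nonneg (α := ℝ) M]
    calc (t + (M:ℝ)) ^ M ≤ (((M:ℝ)+1) * t) ^ M := pow_le_pow_left₀ (by positivity) h1 M
    _ = ((M:ℝ)+1) ^ M * t ^ M := mul_pow _ _ _
  have hc2 : (0:ℝ) ≤ Real.exp (θ-1) * t ^ (θ-1) / t ^ M := by positivity
  have hfin : Real.exp (θ-1) * t ^ (θ-1) / t ^ M * ∑' n : ℕ, ((n:ℝ)+1) ^ M * t ^ n / (n.factorial : ℝ)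
      ≤ Real.exp (θ-1) * t ^ (θ-1) * (((M:ℝ)+1) ^ M) * Real.exp t := by
    calc Real.exp (θ-1) * t ^ (θ-1) / t ^ M * ∑' n : ℕ, ((n:ℝ)+1) ^ M * t ^ n / (n.factorial : ℝ)
        ≤ Real.exp (θ-1) * t ^ (θ-1) / t ^ M * ((t + (M:ℝ)) ^ M * Real.exp t) :=
          mul_le_mul_of_nonneg_left hmom' hc2
    _ ≤ Real.exp (θ-1) * t ^ (θ-1) / t ^ M * ((((M:ℝ)+1) ^ M * t ^ M) * Real.exp t) := by
          apply mul_le_mul_of_nonneg_left _ hc2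
          exact mul_le_mul_of_nonneg_right hTM (Real.exp_nonneg _)
    _ = Real.exp (θ-1) * t ^ (θ-1) * (((M:ℝ)+1) ^ M) * Real.exp t := by
          field_simp
  calc kummerM θ t
      ≤ Real.exp (θ-1) * t ^ (θ-1) * Real.exp t
        + Real.exp (θ-1) * t ^ (θ-1) / t ^ M * ∑' n : ℕ, ((n:ℝ)+1) ^ M * t ^ n / (n.factorial : ℝ) := hb
  _ ≤ Real.exp (θ-1) * t ^ (θ-1) * Real.exp t
        + Real.exp (θ-1) * t ^ (θ-1) * (((M:ℝ)+1) ^ M) * Real.exp t := by linarith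
  _ = (Real.exp (θ-1) * (1 + ((M:ℝ)+1) ^ M)) * Real.exp t * t ^ (θ-1) := by ring

end FkumAux

open FkumAux

/-- For `θ > 0` there is a constant `C > 0` such that for all `u > 0`:
`F(u) ≤ C·u` if `u ≤ 1`, and `F(u) ≤ C·u^θ` if `u ≥ 1`. -/
theorem Fkum_upper_bound (θ : ℝ) (hθ : 0 < θ) :
    ∃ C : ℝ, 0 < C ∧ ∀ u : ℝ, 0 < u →
      (u ≤ 1 → Fkum θ u ≤ C * u) ∧ (1 ≤ u → Fkum θ u ≤ C * u ^ θ) := by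
  have tail : ∃ C₂ : ℝ, 0 < C₂ ∧ ∀ t : ℝ, 1 ≤ t →
      Real.exp (-t) * kummerM θ t ≤ C₂ * t ^ (θ-1) := by
    rcases le_or_gt θ 1 with hθ1 | hθ1
    · refine ⟨2, by norm_num, fun t ht => ?_⟩
      have h := tail_le_one hθ hθ1 (show (0:ℝ) < t by linarith)
      have e : Real.exp (-t) * Real.exp t = 1 := by rw [← Real.exp_add]; simp
      calc Real.exp (-t) * kummerM θ t ≤ Real.exp (-t) * (2 * Real.exp t * t ^ (θ-1)) :=
            mul_le_mul_of_nonneg_left h (Real.exp_nonneg _)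
      _ = (Real.exp (-t) * Real.exp t) * (2 * t ^ (θ-1)) := by ring
      _ = 2 * t ^ (θ-1) := by rw [e, one_mul]
    · refine ⟨Real.exp (θ-1) * (1 + ((⌈θ-1⌉₊:ℝ)+1) ^ (⌈θ-1⌉₊ : ℕ)), by positivity, fun t ht => ?_⟩
      have h := tail_ge_one hθ1.le ht
      have e : Real.exp (-t) * Real.exp t = 1 := by rw [← Real.exp_add]; simp
      calc Real.exp (-t) * kummerM θ t
          ≤ Real.exp (-t) * ((Real.exp (θ-1) * (1 + ((⌈θ-1⌉₊:ℝ)+1) ^ (⌈θ-1⌉₊ : ℕ))) * Real.exp t * t ^ (θ-1)) :=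
            mul_le_mul_of_nonneg_left h (Real.exp_nonneg _)
      _ = (Real.exp (-t) * Real.exp t) * ((Real.exp (θ-1) * (1 + ((⌈θ-1⌉₊:ℝ)+1) ^ (⌈θ-1⌉₊ : ℕ))) * t ^ (θ-1)) := by
            ring
      _ = (Real.exp (θ-1) * (1 + ((⌈θ-1⌉₊:ℝ)+1) ^ (⌈θ-1⌉₊ : ℕ))) * t ^ (θ-1) := by rw [e, one_mul]
  obtain ⟨C₂, hC₂, htail⟩ := tail
  set B := kummerM θ 1 with hB
  have hB1 : 1 ≤ B := one_le_kummer_one hθ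
  have hθB : 0 < θ * B := mul_pos hθ (lt_of_lt_of_le one_pos hB1)
  refine ⟨θ * B + C₂, by linarith, fun u hu => ?_⟩
  have hg : ∀ a b : ℝ, 0 ≤ a → a ≤ b →
      IntervalIntegrable (fun t => Real.exp (-t) * kummerM θ t) volume a b := by
    intro a b ha hab
    have hmono : MonotoneOn (kummerM θ) (Set.uIcc a b) := by
      rw [Set.uIcc_of_le hab]
      intro x hx y hy hxy
      exact kummer_mono hθ (le_trans ha hx.1) hxy
    exact (hmono.intervalIntegrable).continuousOn_mul
      ((Real.continuous_exp.comp continuous_neg).continuousOn)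
  have hsmall : ∀ b : ℝ, 0 ≤ b → b ≤ 1 →
      (∫ t in (0:ℝ)..b, Real.exp (-t) * kummerM θ t) ≤ B * b := by
    intro b hb hb1
    have hpt : ∀ x ∈ Set.Icc (0:ℝ) b, Real.exp (-x) * kummerM θ x ≤ B := by
      intro x hx
      have h1 : Real.exp (-x) ≤ 1 := by
        calc Real.exp (-x) ≤ Real.exp 0 := Real.exp_le_exp.2 (by linarith [hx.1])
        _ = 1 := Real.exp_zero
      have h2 : kummerM θ x ≤ B := kummer_mono hθ hx.1 (hx.2.trans hb1)
      have h3 : 0 ≤ kummerM θ x := kummer_nonneg hθ hx.1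
      calc Real.exp (-x) * kummerM θ x ≤ 1 * B := mul_le_mul h1 h2 h3 zero_le_one
      _ = B := one_mul B
    have hmon := intervalIntegral.integral_mono_on hb (hg 0 b le_rfl hb)
      (intervalIntegrable_const (c := B)) hpt
    rw [intervalIntegral.integral_const] at hmon
    calc (∫ t in (0:ℝ)..b, Real.exp (-t) * kummerM θ t) ≤ (b - 0) • B := hmon
    _ = B * b := by rw [smul_eq_mul]; ring
  constructor
  · intro hu1
    have h := hsmall u hu.le hu1
    simp only [Fkum]
    calc θ * ∫ t in (0:ℝ)..u, Real.exp (-t) * kummerM θ t ≤ θ * (B * u) :=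
          mul_le_mul_of_nonneg_left h hθ.le
    _ = (θ * B) * u := by ring
    _ ≤ (θ * B + C₂) * u := by nlinarith
  · intro hu1
    have hsplit : (∫ t in (0:ℝ)..u, Real.exp (-t) * kummerM θ t)
        = (∫ t in (0:ℝ)..1, Real.exp (-t) * kummerM θ t)
          + ∫ t in (1:ℝ)..u, Real.exp (-t) * kummerM θ t :=
      (intervalIntegral.integral_add_adjacent_intervals (hg 0 1 le_rfl zero_le_one)
        (hg 1 u zero_le_one hu1)).symm
    have h1 : (∫ t in (0:ℝ)..1, Real.exp (-t) * kummerM θ t) ≤ B := by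
      have := hsmall 1 zero_le_one le_rfl
      simpa using this
    have h2 : (∫ t in (1:ℝ)..u, Real.exp (-t) * kummerM θ t) ≤ C₂ * ((u ^ θ - 1)/θ) := by
      have hmon := intervalIntegral.integral_mono_on hu1 (hg 1 u zero_le_one hu1)
        ((intervalIntegral.intervalIntegrable_rpow' (by linarith : (-1:ℝ) < θ-1)).const_mul C₂)
        (fun x hx => htail x hx.1)
      have hint : (∫ t in (1:ℝ)..u, C₂ * t ^ (θ-1)) = C₂ * ((u ^ θ - 1)/θ) := by
        rw [intervalIntegral.integral_const_mul, integral_rpow (Or.inl (by linarith : (-1:ℝ) < θ-1))]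
        rw [show θ - 1 + 1 = θ by ring, Real.one_rpow]
      rw [hint] at hmon
      exact hmon
    have huθ : 1 ≤ u ^ θ := by
      calc (1:ℝ) = 1 ^ θ := (Real.one_rpow θ).symm
      _ ≤ u ^ θ := Real.rpow_le_rpow zero_le_one hu1 hθ.le
    simp only [Fkum]
    rw [hsplit]
    have hBθ : 0 ≤ θ * B * (u ^ θ - 1) := mul_nonneg hθB.le (by linarith)
    calc θ * ((∫ t in (0:ℝ)..1, Real.exp (-t) * kummerM θ t)
          + ∫ t in (1:ℝ)..u, Real.exp (-t) * kummerM θ t)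
        ≤ θ * (B + C₂ * ((u ^ θ - 1)/θ)) := mul_le_mul_of_nonneg_left (add_le_add h1 h2) hθ.le
    _ = θ * B + C₂ * (u ^ θ - 1) := by field_simp
    _ ≤ (θ * B + C₂) * u ^ θ := by nlinarith
end
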